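/- arXiv:2207.02421 — 3 statements merged into one kernel-verified Lean document; each statement's English description precedes it below -/
import Mathlib

section
/- Let F : ℝ → Matrix (Fin 3) (Fin 3) ℝ be differentiable at t with derivative Ḟ, suppose F(t) is invertible, and let a₀ ∈ ℝ³ be a vector with F(t)·a₀ ≠ 0. Define the fibre stretch λ(s) = ‖F(s)·a₀‖ (Euclidean norm), the velocity gradient l = Ḟ F(t)⁻¹, and the rate of strain tensor d = (l + lᵀ)/2. Then λ is differentiable at t and its derivative (the fibre strain rate) equals ε = ((F(t)a₀) · (d ·ᵥ (F(t)a₀))) / λ(t), i.e. λ'(t) = (F a₀)ᵀ d (F a₀) / λ. -/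
open Matrix

/-- Fibre strain rate: with `l = Fdot (F t)⁻¹`, `d = (l + lᵀ)/2`, and the fibre
stretch `λ s = ‖F s a₀‖` (Euclidean norm, i.e. `√((F s a₀) ⬝ᵥ (F s a₀))`), the
stretch is differentiable at `t` with derivative
`ε = (F a₀)ᵀ d (F a₀) / λ`. -/
theorem fibre_strain_rate
    (F : ℝ → Matrix (Fin 3) (Fin 3) ℝ) (Fdot : Matrix (Fin 3) (Fin 3) ℝ) (t : ℝ)
    (a₀ : Fin 3 → ℝ)
    (hF : ∀ i j, HasDerivAt (fun s => F s i j) (Fdot i j) t)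
    (hinv : IsUnit (F t).det)
    (ha : F t *ᵥ a₀ ≠ 0) :
    HasDerivAt (fun s => Real.sqrt ((F s *ᵥ a₀) ⬝ᵥ (F s *ᵥ a₀)))
      (((F t *ᵥ a₀) ⬝ᵥ
          ((((1 : ℝ) / 2) • (Fdot * (F t)⁻¹ + (Fdot * (F t)⁻¹)ᵀ)) *ᵥ (F t *ᵥ a₀))) /
        Real.sqrt ((F t *ᵥ a₀) ⬝ᵥ (F t *ᵥ a₀))) t := by
  have hx : ∀ i, HasDerivAt (fun s => (F s *ᵥ a₀) i) ((Fdot *ᵥ a₀) i) t := by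
    intro i
    simp only [mulVec, dotProduct]
    exact HasDerivAt.fun_sum fun j _ => (hF i j).mul_const (a₀ j)
  have hg : HasDerivAt (fun s => (F s *ᵥ a₀) ⬝ᵥ (F s *ᵥ a₀))
      (2 * ((Fdot *ᵥ a₀) ⬝ᵥ (F t *ᵥ a₀))) t := by
    have : HasDerivAt (fun s => (F s *ᵥ a₀) ⬝ᵥ (F s *ᵥ a₀))
        (∑ i, ((Fdot *ᵥ a₀) i * (F t *ᵥ a₀) i + (F t *ᵥ a₀) i * (Fdot *ᵥ a₀) i)) t := by
      simp only [dotProduct]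
      exact HasDerivAt.fun_sum fun i _ => (hx i).mul (hx i)
    convert this using 1
    simp [dotProduct, mul_comm, two_mul, Finset.sum_add_distrib]
  have hne : (F t *ᵥ a₀) ⬝ᵥ (F t *ᵥ a₀) ≠ 0 := by
    exact fun h => ha (dotProduct_self_eq_zero.mp h)
  have hsq := hg.sqrt hne
  convert hsq using 1
  have hFinv : (F t)⁻¹ *ᵥ (F t *ᵥ a₀) = a₀ := by
    rw [mulVec_mulVec, nonsing_inv_mul _ hinv, one_mulVec]
  set x := F t *ᵥ a₀
  set l := Fdot * (F t)⁻¹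
  have hl : l *ᵥ x = Fdot *ᵥ a₀ := by
    rw [← mulVec_mulVec, hFinv]
  have hlt : x ⬝ᵥ (lᵀ *ᵥ x) = x ⬝ᵥ (l *ᵥ x) := by
    rw [dotProduct_mulVec, vecMul_transpose, dotProduct_comm]
  rw [smul_mulVec, dotProduct_smul, add_mulVec, dotProduct_add, hlt, hl]
  rw [dotProduct_comm]
  simp only [smul_eq_mul]
  field_simp
  ring
end

section
/- Let F : ℝ → Matrix (Fin 3) (Fin 3) ℝ be differentiable at t with derivative Ḟ, suppose F(t) is invertible with det F(t) > 0, and let a₀ ∈ ℝ³ with F(t)·a₀ ≠ 0. Define the modified stretch λ̄(s) = (det F(s))^{-1/3} · ‖F(s)·a₀‖, the modified deformation gradient F̄ = (det F(t))^{-1/3} F(t), the velocity gradient l = Ḟ F(t)⁻¹, and the rate of strain tensor d = (l + lᵀ)/2. Then λ̄ is differentiable at t and its derivative (the modified strain rate) is ε̄ = λ̄'(t) = ((F̄a₀)ᵀ (d − (1/3)(tr d)·I) (F̄a₀)) / λ̄(t), where I is the 3×3 identity matrix; that is, ε̄ is obtained by contracting the deviatoric projection of d between modified fibre directions. -/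
open Matrix

private lemma det3_hasDerivAt (F : ℝ → Matrix (Fin 3) (Fin 3) ℝ)
    (Fdot : Matrix (Fin 3) (Fin 3) ℝ) (t : ℝ)
    (hF : ∀ i j, HasDerivAt (fun s => F s i j) (Fdot i j) t) :
    HasDerivAt (fun s => (F s).det) ((Fdot * (F t).adjugate).trace) t := by
  have h := (((((((hF 0 0).mul (hF 1 1)).mul (hF 2 2)).sub
      (((hF 0 0).mul (hF 1 2)).mul (hF 2 1))).sub
      (((hF 0 1).mul (hF 1 0)).mul (hF 2 2))).add
      (((hF 0 1).mul (hF 1 2)).mul (hF 2 0))).add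
      (((hF 0 2).mul (hF 1 0)).mul (hF 2 1))).sub
      (((hF 0 2).mul (hF 1 1)).mul (hF 2 0))
  have hfun : (fun s => (F s).det) = (fun s =>
      F s 0 0 * F s 1 1 * F s 2 2 - F s 0 0 * F s 1 2 * F s 2 1 -
        F s 0 1 * F s 1 0 * F s 2 2 + F s 0 1 * F s 1 2 * F s 2 0 +
        F s 0 2 * F s 1 0 * F s 2 1 - F s 0 2 * F s 1 1 * F s 2 0) := by
    funext s; rw [Matrix.det_fin_three]
  rw [hfun]
  convert h using 1
  · rfl
  · rfl
  · rfl
  simp [Matrix.trace_fin_three, Matrix.mul_apply, Matrix.adjugate_fin_three,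
    Fin.sum_univ_three]
  ring

/-- Modified (isochoric) fibre strain rate: with `F̄ = (det F t)^(-1/3) • F t`,
`l = Ḟ (F t)⁻¹`, `d = (l + lᵀ)/2`, the modified stretch
`λ̄ s = (det F s)^(-1/3) ‖F s a₀‖` is differentiable at `t` with derivative
`ε̄ = (F̄ a₀)ᵀ (d − (1/3)(tr d) I) (F̄ a₀) / λ̄ t`. -/
theorem modified_fibre_strain_rate
    (F : ℝ → Matrix (Fin 3) (Fin 3) ℝ) (Fdot : Matrix (Fin 3) (Fin 3) ℝ) (t : ℝ)
    (a₀ : Fin 3 → ℝ)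
    (hF : ∀ i j, HasDerivAt (fun s => F s i j) (Fdot i j) t)
    (hinv : IsUnit (F t).det) (hdet : 0 < (F t).det)
    (ha : F t *ᵥ a₀ ≠ 0) :
    HasDerivAt
      (fun s => (F s).det ^ (-(1 : ℝ) / 3) * Real.sqrt ((F s *ᵥ a₀) ⬝ᵥ (F s *ᵥ a₀)))
      ((((((F t).det ^ (-(1 : ℝ) / 3)) • F t) *ᵥ a₀) ⬝ᵥ
          (((((1 : ℝ) / 2) • (Fdot * (F t)⁻¹ + (Fdot * (F t)⁻¹)ᵀ)) -
              (((1 : ℝ) / 3) *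
                  (((1 : ℝ) / 2) • (Fdot * (F t)⁻¹ + (Fdot * (F t)⁻¹)ᵀ)).trace) •
                (1 : Matrix (Fin 3) (Fin 3) ℝ)) *ᵥ
            (((((F t).det ^ (-(1 : ℝ) / 3)) • F t) *ᵥ a₀)))) /
        ((F t).det ^ (-(1 : ℝ) / 3) * Real.sqrt ((F t *ᵥ a₀) ⬝ᵥ (F t *ᵥ a₀)))) t := by
  set δ : ℝ := (F t).det with hδ
  set w : Fin 3 → ℝ := F t *ᵥ a₀ with hw
  set l : Matrix (Fin 3) (Fin 3) ℝ := Fdot * (F t)⁻¹ with hl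
  -- derivative of entries of F *ᵥ a₀
  have hwd : ∀ i, HasDerivAt (fun s => (F s *ᵥ a₀) i) ((Fdot *ᵥ a₀) i) t := by
    intro i
    have := HasDerivAt.fun_sum (fun j (_ : j ∈ Finset.univ) => (hF i j).mul_const (a₀ j))
    simpa [Matrix.mulVec, dotProduct] using this
  -- derivative of Q
  have hQ : HasDerivAt (fun s => (F s *ᵥ a₀) ⬝ᵥ (F s *ᵥ a₀))
      (2 * ((Fdot *ᵥ a₀) ⬝ᵥ w)) t := by
    have := HasDerivAt.fun_sum (fun i (_ : i ∈ Finset.univ) => (hwd i).mul (hwd i))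
    simpa [dotProduct, two_mul, Finset.sum_add_distrib, mul_comm] using this
  have hQpos : 0 < w ⬝ᵥ w := by
    rcases (dotProduct_self_eq_zero (v := w)).not.2 ha with h0
    have hnn : 0 ≤ w ⬝ᵥ w := Finset.sum_nonneg fun i _ => mul_self_nonneg _
    exact lt_of_le_of_ne hnn (Ne.symm h0)
  have hN : HasDerivAt (fun s => Real.sqrt ((F s *ᵥ a₀) ⬝ᵥ (F s *ᵥ a₀)))
      ((1 / (2 * Real.sqrt (w ⬝ᵥ w))) * (2 * ((Fdot *ᵥ a₀) ⬝ᵥ w))) t := by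
    have := (Real.hasDerivAt_sqrt hQpos.ne').comp t hQ
    simpa [Function.comp_def] using this
  have hdetd := det3_hasDerivAt F Fdot t hF
  have hg : HasDerivAt (fun s => (F s).det ^ (-(1 : ℝ) / 3))
      ((-(1 : ℝ) / 3 * δ ^ (-(1 : ℝ) / 3 - 1)) * (Fdot * (F t).adjugate).trace) t := by
    have := (Real.hasDerivAt_rpow_const (p := -(1 : ℝ) / 3) (Or.inl hdet.ne')).comp t hdetd
    simpa [Function.comp_def] using this
  have hprod := hg.mul hN
  -- key algebraic relations
  have hlF : l * F t = Fdot := by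
    rw [hl, Matrix.mul_assoc, Matrix.nonsing_inv_mul _ hinv, Matrix.mul_one]
  have hFa : Fdot *ᵥ a₀ = l *ᵥ w := by
    rw [hw, Matrix.mulVec_mulVec, hlF]
  have hD : (Fdot * (F t).adjugate).trace = δ * l.trace := by
    have : (F t)⁻¹ = δ⁻¹ • (F t).adjugate := by
      rw [Matrix.inv_def, Ring.inverse_eq_inv']
    rw [hl, this, Matrix.mul_smul, Matrix.trace_smul, smul_eq_mul, ← mul_assoc,
      mul_inv_cancel₀ hdet.ne', one_mul]
  convert hprod using 1
  · rfl
  · rfl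
  · rfl
  set c : ℝ := δ ^ (-(1 : ℝ) / 3) with hc
  have hc0 : 0 < c := Real.rpow_pos_of_pos hdet _
  have hp1 : δ ^ (-(1 : ℝ) / 3 - 1) = c / δ := by
    rw [Real.rpow_sub hdet, Real.rpow_one, hc]
  set N : ℝ := Real.sqrt (w ⬝ᵥ w) with hNdef
  have hN0 : 0 < N := Real.sqrt_pos.2 hQpos
  have hN2 : N * N = w ⬝ᵥ w := Real.mul_self_sqrt hQpos.le
  have hnum : ((c • F t) *ᵥ a₀) ⬝ᵥ
      (((((1 : ℝ) / 2) • (l + lᵀ)) -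
          (((1 : ℝ) / 3) * (((1 : ℝ) / 2) • (l + lᵀ)).trace) •
            (1 : Matrix (Fin 3) (Fin 3) ℝ)) *ᵥ ((c • F t) *ᵥ a₀)) =
      c * c * ((w ⬝ᵥ (l *ᵥ w)) - 1 / 3 * l.trace * (w ⬝ᵥ w)) := by
    rw [hw]
    simp [dotProduct, Matrix.mulVec, Matrix.trace_fin_three, Fin.sum_univ_three,
      Matrix.sub_apply, Matrix.add_apply, Matrix.smul_apply, Matrix.one_apply,
      Matrix.transpose_apply, smul_eq_mul]
    ring
  rw [hFa, hD, hnum, hp1, ← hN2, dotProduct_comm (l *ᵥ w) w]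
  field_simp
  ring
end

section
/- Piola identity: let φ : ℝ³ → ℝ³ be twice continuously differentiable, and for each X let F(X) be the 3×3 Jacobian matrix of φ at X (with entries F(X)_{ij} = ∂φ_i/∂X_j). Let cof F(X) = (adjugate F(X))ᵀ denote the cofactor matrix, so that cof F = (det F)·F^{-T} whenever F is invertible. Then each row of the cofactor matrix is divergence-free: for every X and every index i, Σ_{j} ∂/∂X_j [ (cof F(X))_{ij} ] = 0. -/
open Matrix

/-- Piola identity: for a `C²` map `φ : ℝ³ → ℝ³` with deformation gradient
`F(X)_{ij} = ∂φ_i/∂X_j`, every row of the cofactor matrix `cof F = (adjugate F)ᵀ`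
is divergence-free: `∑ j ∂/∂X_j (cof F)_{ij} = 0`. -/
theorem piola_identity
    (φ : (Fin 3 → ℝ) → (Fin 3 → ℝ)) (hφ : ContDiff ℝ 2 φ)
    (F : (Fin 3 → ℝ) → Matrix (Fin 3) (Fin 3) ℝ)
    (hF : ∀ X, F X = Matrix.of fun i j => fderiv ℝ φ X (Pi.single j 1) i) :
    ∀ (X : Fin 3 → ℝ) (i : Fin 3),
      ∑ j : Fin 3,
        fderiv ℝ (fun Y => ((F Y).adjugate)ᵀ i j) X (Pi.single j 1) = 0 := by
  intro X i
  have hφ1 : ContDiff ℝ 1 (fderiv ℝ φ) := hφ.fderiv_right (by norm_num)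
  set f'' := fderiv ℝ (fderiv ℝ φ) X with hf''
  have h2 : HasFDerivAt (fderiv ℝ φ) f'' X :=
    (hφ1.differentiable (by norm_num) X).hasFDerivAt
  have hsymm : ∀ v w, f'' v w = f'' w v :=
    second_derivative_symmetric (fun y => ((hφ.differentiable (by norm_num)) y).hasFDerivAt) h2
  have hE : ∀ (l k : Fin 3), HasFDerivAt (fun Y => fderiv ℝ φ Y (Pi.single l 1) k)
      (((ContinuousLinearMap.proj k).comp
        (ContinuousLinearMap.apply ℝ (Fin 3 → ℝ) (Pi.single l 1))).comp f'') X := by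
    intro l k
    exact (((ContinuousLinearMap.proj k).comp
        (ContinuousLinearMap.apply ℝ (Fin 3 → ℝ) (Pi.single l 1))).hasFDerivAt).comp X h2
  have hM : ∀ (a b c d j : Fin 3),
      fderiv ℝ (fun Y => fderiv ℝ φ Y (Pi.single b 1) a * fderiv ℝ φ Y (Pi.single d 1) c)
        X (Pi.single j 1)
      = fderiv ℝ φ X (Pi.single b 1) a * f'' (Pi.single j 1) (Pi.single d 1) c
        + fderiv ℝ φ X (Pi.single d 1) c * f'' (Pi.single j 1) (Pi.single b 1) a := by
    intro a b c d j
    rw [((hE b a).fun_mul (hE d c)).fderiv]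
    simp
  have hP : ∀ (a b c d : Fin 3), DifferentiableAt ℝ
      (fun Y => fderiv ℝ φ Y (Pi.single b 1) a * fderiv ℝ φ Y (Pi.single d 1) c) X :=
    fun a b c d => ((hE b a).mul (hE d c)).differentiableAt
  have hS : ∀ (a b c d a' b' c' d' j : Fin 3),
      fderiv ℝ (fun Y => fderiv ℝ φ Y (Pi.single b 1) a * fderiv ℝ φ Y (Pi.single d 1) c
        - fderiv ℝ φ Y (Pi.single b' 1) a' * fderiv ℝ φ Y (Pi.single d' 1) c')
        X (Pi.single j 1)
      = (fderiv ℝ φ X (Pi.single b 1) a * f'' (Pi.single j 1) (Pi.single d 1) c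
        + fderiv ℝ φ X (Pi.single d 1) c * f'' (Pi.single j 1) (Pi.single b 1) a)
        - (fderiv ℝ φ X (Pi.single b' 1) a' * f'' (Pi.single j 1) (Pi.single d' 1) c'
        + fderiv ℝ φ X (Pi.single d' 1) c' * f'' (Pi.single j 1) (Pi.single b' 1) a') := by
    intro a b c d a' b' c' d' j
    rw [fderiv_fun_sub (hP a b c d) (hP a' b' c' d')]
    rw [ContinuousLinearMap.sub_apply, hM, hM]
  have hN : ∀ (a b c d a' b' c' d' j : Fin 3),
      fderiv ℝ (fun Y => -(fderiv ℝ φ Y (Pi.single b 1) a * fderiv ℝ φ Y (Pi.single d 1) c)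
        + fderiv ℝ φ Y (Pi.single b' 1) a' * fderiv ℝ φ Y (Pi.single d' 1) c')
        X (Pi.single j 1)
      = -(fderiv ℝ φ X (Pi.single b 1) a * f'' (Pi.single j 1) (Pi.single d 1) c
        + fderiv ℝ φ X (Pi.single d 1) c * f'' (Pi.single j 1) (Pi.single b 1) a)
        + (fderiv ℝ φ X (Pi.single b' 1) a' * f'' (Pi.single j 1) (Pi.single d' 1) c'
        + fderiv ℝ φ X (Pi.single d' 1) c' * f'' (Pi.single j 1) (Pi.single b' 1) a') := by
    intro a b c d a' b' c' d' j
    rw [fderiv_fun_add ((hP a b c d).fun_neg) (hP a' b' c' d')]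
    rw [ContinuousLinearMap.add_apply, fderiv_fun_neg, ContinuousLinearMap.neg_apply, hM, hM]
  simp only [hF, Matrix.adjugate_fin_three, Matrix.transpose_apply, Matrix.of_apply,
    Fin.sum_univ_three]
  fin_cases i <;>
    simp only [Fin.reduceFinMk, Fin.mk_zero, Fin.mk_one, Fin.isValue, Matrix.cons_val',
      Matrix.cons_val_zero, Matrix.cons_val_one, Matrix.head_cons, Matrix.empty_val',
      Matrix.cons_val_fin_one, Matrix.head_fin_const, Matrix.cons_val_two, Matrix.tail_cons,
      hS, hN, hsymm (Pi.single 1 1) (Pi.single 0 1), hsymm (Pi.single 2 1) (Pi.single 0 1),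
      hsymm (Pi.single 2 1) (Pi.single 1 1)] <;>
    ring
end
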